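/- arXiv:2002.00109 — 3 statements merged into one kernel-verified Lean document; each statement's English description precedes it below -/
import Mathlib

section
/- Let L be a first-order language of algebras, R an n-ary relation symbol, L' = L ∪ {R}, and K a class of L'-structures closed under finite (equivalently, arbitrary) direct products in which R of a product is the product of the R's. Suppose the formula φ(z̄) = ∃w̄ ⋁_{j=1}^m ⋀_{k=1}^{n_j} p_{jk}(z̄,w̄) = q_{jk}(z̄,w̄) defines R in K. Then there exists some j ∈ {1,…,m} such that the single formula ψ_j(z̄) = ∃w̄ ⋀_{k=1}^{n_j} p_{jk}(z̄,w̄) = q_{jk}(z̄,w̄) already defines R in K. -/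
open FirstOrder Language Structure

universe u

instance piStructure {L : Language} {I : Type*} (A : I → Type*) [∀ i, L.Structure (A i)] :
    L.Structure (∀ i, A i) where
  funMap f x i := funMap f fun k => x k i
  RelMap r x := ∀ i, RelMap r fun k => x k i

/-- An `L'`-structure for `L' = L ∪ {R}`: an `L`-structure together with an interpretation of
the extra `n`-ary relation symbol `R`. -/
structure ModelR (L : Language) (n : ℕ) where
  carrier : Type u
  str : L.Structure carrier
  R : (Fin n → carrier) → Prop

attribute [instance] ModelR.str

/-- Satisfaction of `ψ_j(z̄) = ∃ w̄ ⋀_k p_k(z̄,w̄) = q_k(z̄,w̄)`. -/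
def SatPP {L : Language} {n W K : ℕ} (p q : Fin K → L.Term (Fin n ⊕ Fin W))
    (M : Type u) [L.Structure M] (e : Fin n → M) : Prop :=
  ∃ w : Fin W → M, ∀ k, (p k).realize (Sum.elim e w) = (q k).realize (Sum.elim e w)


lemma realize_pi {L : Language} {I : Type*} (A : I → Type*) [∀ i, L.Structure (A i)]
    {α : Type*} (t : L.Term α) (v : α → ∀ i, A i) (i : I) :
    t.realize v i = t.realize (fun a => v a i) := by
  induction t with
  | var => rfl
  | func f ts ih =>
      show funMap f (fun k => (ts k).realize v) i = _
      show funMap f (fun k => (ts k).realize v i) = _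
      exact congrArg (funMap f) (funext ih)

/-- if `K` is closed under finite direct products (with `R` of a product the
product of the `R`'s) and the disjunction `φ(z̄) = ∃w̄ ⋁_j ⋀_k p_{jk} = q_{jk}` defines `R` in
`K`, then some single disjunct `ψ_j` already defines `R` in `K`. -/
theorem stmt1 {L : Language} {n W m : ℕ} (hm : 0 < m) (nj : Fin m → ℕ)
    (p q : (j : Fin m) → Fin (nj j) → L.Term (Fin n ⊕ Fin W))
    (K : ModelR.{u} L n → Prop)
    (hprod : ∀ f : Fin m → ModelR.{u} L n, (∀ j, K (f j)) →
      K ⟨∀ j, (f j).carrier, inferInstance, fun e => ∀ j, (f j).R fun k => e k j⟩)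
    (hdef : ∀ M : ModelR.{u} L n, K M → ∀ e : Fin n → M.carrier,
      M.R e ↔ ∃ w : Fin W → M.carrier, ∃ j, ∀ k,
        (p j k).realize (Sum.elim e w) = (q j k).realize (Sum.elim e w)) :
    ∃ j : Fin m, ∀ M : ModelR.{u} L n, K M → ∀ e : Fin n → M.carrier,
      M.R e ↔ SatPP (p j) (q j) M.carrier e := by
  -- Each disjunct implies R in K
  have hback : ∀ j (M : ModelR.{u} L n), K M → ∀ e : Fin n → M.carrier,
      SatPP (p j) (q j) M.carrier e → M.R e := by
    rintro j M hM e ⟨w, hw⟩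
    exact (hdef M hM e).2 ⟨w, j, hw⟩
  by_contra h
  push_neg at h
  -- For each j, find a counterexample: a model in K with R e but not SatPP
  have hce : ∀ j, ∃ M : ModelR.{u} L n, K M ∧ ∃ e : Fin n → M.carrier,
      M.R e ∧ ¬ SatPP (p j) (q j) M.carrier e := by
    intro j
    obtain ⟨M, hM, e, he⟩ := h j
    refine ⟨M, hM, e, ?_⟩
    rcases he with ⟨hr, hs⟩ | ⟨hr, hs⟩
    · exact ⟨hr, hs⟩
    · exact absurd (hback j M hM e hs) hr
  choose f hf e he hns using hce
  set P : ModelR.{u} L n :=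
    ⟨∀ j, (f j).carrier, inferInstance, fun v => ∀ j, (f j).R fun k => v k j⟩ with hP
  have hPK : K P := hprod f hf
  have hRE : P.R (fun k j => e j k) := fun j => he j
  obtain ⟨w, j₀, hw⟩ := (hdef P hPK _).1 hRE
  apply hns j₀
  refine ⟨fun l => w l j₀, fun k => ?_⟩
  have := congrFun (hw k) j₀
  rw [realize_pi, realize_pi] at this
  convert this using 2 <;> funext a <;> cases a <;> rfl
end

section
/- Let σ be an h-ary central relation on a finite set P with h ≥ 3 and h odd, and let (c_1,…,c_h) ∉ σ. Suppose U : P^{N+2} → P, (a_1,…,a_N) ≠ (b_1,…,b_N) ∈ P^N, and U(x,y,a_1,…,a_N) = x and U(x,y,b_1,…,b_N) = y for all x,y ∈ P. Then U does not preserve σ; that is, there exist h-tuples t_1,…,t_{N+2} ∈ σ such that the componentwise application of U to them yields an h-tuple not in σ. -/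
/-- let `σ` be an `h`-ary central relation on a finite set `P` with `h ≥ 3` odd,
`c ∉ σ`, and let `U : P^{N+2} → P` satisfy `U(x,y,ā) = x` and `U(x,y,b̄) = y` for tuples
`ā ≠ b̄`. Then `U` does not preserve `σ`. -/
theorem stmt5 {P : Type*} [Fintype P] {h N : ℕ} (hh3 : 3 ≤ h) (hodd : Odd h)
    (σ : (Fin h → P) → Prop)
    (hsym : ∀ (π : Equiv.Perm (Fin h)) (t : Fin h → P), σ t → σ (t ∘ π))
    (hrefl : ∀ t : Fin h → P, (∃ i j, i ≠ j ∧ t i = t j) → σ t)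
    (hcentral : ∃ c0 : P, ∀ t : Fin h → P, t ⟨0, by omega⟩ = c0 → σ t)
    (c : Fin h → P) (hc : ¬ σ c)
    (U : P → P → (Fin N → P) → P) (a b : Fin N → P) (hab : a ≠ b)
    (hUa : ∀ x y : P, U x y a = x) (hUb : ∀ x y : P, U x y b = y) :
    ¬ (∀ (t₁ t₂ : Fin h → P) (ts : Fin N → Fin h → P),
        σ t₁ → σ t₂ → (∀ i, σ (ts i)) →
        σ fun l => U (t₁ l) (t₂ l) fun i => ts i l) := by
  intro H
  obtain ⟨c0, hc0⟩ := hcentral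
  set z : Fin h := ⟨0, by omega⟩ with hz
  set o : Fin h := ⟨1, by omega⟩ with ho
  set tw : Fin h := ⟨2, by omega⟩ with htw
  set t₁ : Fin h → P := fun l => if l = z then c0 else c l with ht₁
  set t₂ : Fin h → P := fun _ => c z with ht₂
  set ts : Fin N → Fin h → P := fun i l => if l = z then b i else a i with hts
  have h1 : σ t₁ := hc0 _ (by simp [ht₁])
  have h2 : σ t₂ := hrefl _ ⟨z, o, by simp [hz, ho, Fin.ext_iff], rfl⟩
  have h3 : ∀ i, σ (ts i) := fun i =>
    hrefl _ ⟨o, tw, by simp [ho, htw, Fin.ext_iff], by simp [hts, ho, htw, hz, Fin.ext_iff]⟩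
  have key := H t₁ t₂ ts h1 h2 h3
  apply hc
  have : (fun l => U (t₁ l) (t₂ l) fun i => ts i l) = c := by
    funext l
    by_cases hl : l = z
    · have : (fun i => ts i l) = b := by funext i; simp [hts, hl]
      rw [this, hUb, ht₂, hl]
    · have : (fun i => ts i l) = a := by funext i; simp [hts, hl]
      rw [this, hUa, ht₁]
      simp [hl]
  rwa [this] at key
end

section
/- Let A ≤ ∏_{i∈I} A_i be a global subdirect product with respect to a topology τ on I, and let J ⊆ I be a clopen-like set of the form J = ⋂_{k=1}^N E(e_k, c_k) such that both J and I − J belong to τ (where E(x,y) = {i : x(i) = y(i)}). Define θ = {(a,b) ∈ A² : J ⊆ E(a,b)} and δ = {(a,b) ∈ A² : I−J ⊆ E(a,b)}. Then θ ∩ δ = Δ^A and θ ∘ δ = ∇^A; hence θ and δ are a pair of complementary factor congruences of A. -/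
open FirstOrder Language Structure

universe u v

/-- A congruence of an algebra: an equivalence relation compatible with all operations. -/
def IsCongruence (L : Language) (A : Type*) [L.Structure A] (r : A → A → Prop) : Prop :=
  Equivalence r ∧ ∀ ⦃n : ℕ⦄ (f : L.Functions n) (x y : Fin n → A),
    (∀ i, r (x i) (y i)) → r (funMap f x) (funMap f y)

/-- in a global subdirect product `A ≤ ∏ A_i`, for `J = ⋂_k E(e_k,c_k)` with
`J` and `I − J` open, the relations `θ = {(a,b) : J ⊆ E(a,b)}` and `δ = {(a,b) : I−J ⊆ E(a,b)}`
form a pair of complementary factor congruences: `θ ∩ δ = Δ` and `θ ∘ δ = ∇`. -/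
theorem stmt14 {L : Language} {I : Type u} {A : I → Type v} [∀ i, L.Structure (A i)]
    (S : L.Substructure (∀ i, A i))
    (hsub : ∀ i, Function.Surjective fun x : S => (x : ∀ j, A j) i)
    (τ : TopologicalSpace I)
    (hE : ∀ x y : S, IsOpen {i | (x : ∀ j, A j) i = (y : ∀ j, A j) i})
    (hpatch : ∀ (ι : Type u) (U : ι → Set I) (xr : ι → S),
      (∀ r, IsOpen (U r)) → (⋃ r, U r) = Set.univ →
      (∀ r s, U r ∩ U s ⊆ {i | (xr r : ∀ j, A j) i = (xr s : ∀ j, A j) i}) →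
      ∃ x : S, ∀ r, U r ⊆ {i | (x : ∀ j, A j) i = (xr r : ∀ j, A j) i})
    {N : ℕ} (e c : Fin N → S) (J : Set I)
    (hJ : J = ⋂ k, {i | (e k : ∀ j, A j) i = (c k : ∀ j, A j) i})
    (hJopen : IsOpen J) (hJcopen : IsOpen Jᶜ)
    (θ δ : S → S → Prop)
    (hθ : θ = fun (a b : S) => J ⊆ {i | (a : ∀ j, A j) i = (b : ∀ j, A j) i})
    (hδ : δ = fun (a b : S) => Jᶜ ⊆ {i | (a : ∀ j, A j) i = (b : ∀ j, A j) i}) :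
    IsCongruence L S θ ∧ IsCongruence L S δ ∧
    (∀ a b : S, (θ a b ∧ δ a b) ↔ a = b) ∧
    (∀ a b : S, ∃ z : S, θ a z ∧ δ z b) := by
  subst hθ hδ hJ
  have key : ∀ (K : Set I),
      IsCongruence L S (fun a b : S => K ⊆ {i | (a : ∀ j, A j) i = (b : ∀ j, A j) i}) := by
    intro K
    constructor
    · constructor
      · intro a i _; rfl
      · intro a b h i hi; exact (h hi).symm
      · intro a b c hab hbc i hi; exact (hab hi).trans (hbc hi)
    · intro n f x y h i hi
      show funMap f (fun k => ((x k : ∀ j, A j)) i) = funMap f (fun k => ((y k : ∀ j, A j)) i)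
      congr 1
      funext k
      exact h k hi
  refine ⟨key _, key _, ?_, ?_⟩
  · intro a b
    constructor
    · rintro ⟨h1, h2⟩
      apply Subtype.ext; funext i
      by_cases hi : i ∈ ⋂ k, {i | (e k : ∀ j, A j) i = (c k : ∀ j, A j) i}
      · exact h1 hi
      · exact h2 hi
    · rintro rfl; exact ⟨fun i _ => rfl, fun i _ => rfl⟩
  · intro a b
    set K : Set I := ⋂ k, {i | (e k : ∀ j, A j) i = (c k : ∀ j, A j) i} with hK
    obtain ⟨z, hz⟩ := hpatch (ULift Bool)
      (fun r => if r.down then K else Kᶜ) (fun r => if r.down then a else b)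
      (by rintro ⟨r⟩; cases r <;> simp [hJopen, hJcopen])
      (by
        apply Set.eq_univ_of_forall
        intro i
        by_cases hi : i ∈ K
        · exact Set.mem_iUnion.2 ⟨⟨true⟩, by simp only [reduceIte]; exact hi⟩
        · exact Set.mem_iUnion.2 ⟨⟨false⟩, by simp only [reduceIte]; exact hi⟩)
      (by
        rintro ⟨r⟩ ⟨s⟩ i hi
        cases r <;> cases s <;> simp only [reduceIte] at hi ⊢
        · trivial
        · exact absurd hi.2 hi.1
        · exact absurd hi.1 hi.2
        · trivial)
    refine ⟨z, ?_, ?_⟩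
    · intro i hi
      have := hz ⟨true⟩
      simp only [reduceIte] at this
      exact (this hi).symm
    · intro i hi
      have := hz ⟨false⟩
      simp only [reduceIte] at this
      exact this hi
end
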